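/- Let ℓ : ℝ → [0,∞] be a convex loss with ℓ(1) = 0, and let q̃(x) = 1.5x − 0.5x³. Fix B ≥ 1, 0 < ξ ≤ 1, and let γ = (1/32)·min(1/B, ξ). Then for every x with 1/(4B) ≤ x ≤ 1, we have ℓ(q̃(x) − γ) ≤ e^{−γ} ℓ(x), provided that ℓ is nonincreasing on [0,1] and ℓ(x) = ℓ(min(x, 1−ξ/2)) for x in this range. -/
import Mathlib


set_option maxHeartbeats 1000000 in
theorem stmt5 (ℓ : ℝ → ℝ) (hnn : ∀ z, 0 ≤ ℓ z)
    (hconv : ConvexOn ℝ (Set.Icc (0 : ℝ) 1) ℓ)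
    (hone : ℓ 1 = 0)
    (hmono : AntitoneOn ℓ (Set.Icc (0 : ℝ) 1))
    (B ξ γ : ℝ) (hB : 1 ≤ B) (hξ0 : 0 < ξ) (hξ1 : ξ ≤ 1)
    (hγ : γ = 1 / 32 * min (1 / B) ξ)
    (htrunc : ∀ x, 1 / (4 * B) ≤ x → x ≤ 1 → ℓ x = ℓ (min x (1 - ξ / 2))) :
    ∀ x, 1 / (4 * B) ≤ x → x ≤ 1 →
      ℓ (1.5 * x - 0.5 * x ^ 3 - γ) ≤ Real.exp (-γ) * ℓ x := by
  intro x hx1 hx2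
  have hnum : (1.5 : ℝ) = 3/2 ∧ (0.5 : ℝ) = 1/2 := by norm_num
  rw [hnum.1, hnum.2]
  have hB0 : (0:ℝ) < B := lt_of_lt_of_le one_pos hB
  have hB4 : (0:ℝ) < 1 / (4 * B) := by positivity
  have hBle : 1 / (4 * B) ≤ 1 / 4 := by
    apply div_le_div_of_nonneg_left (by norm_num) (by norm_num) (by linarith)
  set x' := min x (1 - ξ / 2) with hx'def
  have hγξ : γ ≤ ξ / 32 := by
    rw [hγ]; have := min_le_right (1/B) ξ; linarith
  have hγB : γ ≤ 1 / (32 * B) := by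
    rw [hγ]
    have := min_le_left (1/B) ξ
    have : (1:ℝ)/32 * min (1/B) ξ ≤ 1/32 * (1/B) := by
      apply mul_le_mul_of_nonneg_left this (by norm_num)
    calc 1/32 * min (1/B) ξ ≤ 1/32 * (1/B) := this
      _ = 1/(32*B) := by field_simp
  have hγ0 : 0 < γ := by
    rw [hγ]
    have h1 : 0 < min (1/B) ξ := lt_min (by positivity) hξ0
    positivity
  have hx'le : x' ≤ 1 - ξ / 2 := min_le_right _ _
  have hx'lex : x' ≤ x := min_le_left _ _
  have hx'lt1 : x' < 1 := by linarith
  have hx'lb : 1 / (4 * B) ≤ x' := by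
    apply le_min hx1; linarith
  clear_value x'
  have hx'pos : 0 < x' := lt_of_lt_of_le hB4 hx'lb
  have hx0 : 0 < x := lt_of_lt_of_le hB4 hx1
  -- key: q̃(x') ≥ x' + 2γ
  have hkey : x' + 2 * γ ≤ 3/2 * x' - 1/2 * x' ^ 3 := by
    rcases le_or_gt (1/2 : ℝ) x' with h | h
    · -- x' ≥ 1/2 : use 0.5 x'(1-x')(1+x') ≥ ξ/8 ≥ 2γ
      nlinarith [mul_nonneg (mul_nonneg (by linarith : (0:ℝ) ≤ x' - 1/2) (by linarith : (0:ℝ) ≤ 1 - x')) (by linarith : (0:ℝ) ≤ 1 + x')]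
    · -- x' < 1/2 : 1 - x'^2 ≥ 3/4, x' ≥ 1/(4B)
      have h1 : 1 / (4*B) * (3/4) ≤ x' * (1 - x'^2) := by
        have h2 : (3/4 : ℝ) ≤ 1 - x'^2 := by nlinarith
        have := mul_le_mul hx'lb h2 (by norm_num) (le_of_lt hx'pos)
        linarith
      have h3 : 4 * γ ≤ 1 / (4*B) * (3/4) := by
        have : 1/(32*B) ≤ 1/(4*B) * (3/16) := by
          rw [div_mul_eq_mul_div, one_mul]
          rw [div_le_div_iff₀ (by positivity) (by positivity)]
          ring_nf; nlinarith
        nlinarith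
      nlinarith
  -- monotonicity of q̃ on [0,1]
  have hmonoq : 3/2 * x' - 1/2 * x' ^ 3 ≤ 3/2 * x - 1/2 * x ^ 3 := by
    have e1 : x * x' ≤ 1 * 1 := mul_le_mul hx2 hx'lt1.le hx'pos.le zero_le_one
    have e2 : x * x ≤ 1 * 1 := mul_le_mul hx2 hx2 hx0.le zero_le_one
    have e3 : x' * x' ≤ 1 * 1 := mul_le_mul hx'lt1.le hx'lt1.le hx'pos.le zero_le_one
    have h1 : (0:ℝ) ≤ 3 - x^2 - x*x' - x'^2 := by
      have : x^2 = x*x := sq x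
      have : x'^2 = x'*x' := sq x'
      linarith [sq x ▸ e2, sq x' ▸ e3]
    have h2 : (0:ℝ) ≤ (x - x') * (3 - x^2 - x*x' - x'^2) :=
      mul_nonneg (sub_nonneg.mpr hx'lex) h1
    have h3 : 3/2 * x - 1/2 * x ^ 3 - (3/2 * x' - 1/2 * x' ^ 3)
        = 1/2 * ((x - x') * (3 - x^2 - x*x' - x'^2)) := by ring
    linarith
  have hqle1 : 3/2 * x - 1/2 * x ^ 3 ≤ 1 := by
    have h2 : (0:ℝ) ≤ (x - 1)^2 * (x + 2) := mul_nonneg (sq_nonneg _) (by linarith)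
    have h3 : 1 - (3/2 * x - 1/2 * x ^ 3) = 1/2 * ((x - 1)^2 * (x + 2)) := by ring
    linarith
  set t := 3/2 * x - 1/2 * x ^ 3 - γ with htdef
  have htlb : x' + γ ≤ t := by simp only [htdef]; linarith
  have htub : t ≤ 1 := by simp only [htdef]; linarith
  have ht0 : 0 ≤ t := by linarith
  have hγ1x : γ ≤ 1 - x' := by linarith [hγξ, hξ1, hx'le]
  -- membership facts
  have hmem1 : x' ∈ Set.Icc (0:ℝ) 1 := ⟨le_of_lt hx'pos, le_of_lt hx'lt1⟩
  have hmem2 : (x' + γ) ∈ Set.Icc (0:ℝ) 1 := ⟨by linarith, by linarith⟩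
  have hmemt : t ∈ Set.Icc (0:ℝ) 1 := ⟨ht0, htub⟩
  -- step 1: ℓ t ≤ ℓ (x' + γ)
  have step1 : ℓ t ≤ ℓ (x' + γ) := hmono hmem2 hmemt htlb
  -- step 2: convexity: ℓ (x' + γ) ≤ (1 - γ/(1-x')) * ℓ x'
  have hd : 0 < 1 - x' := by linarith
  set a := 1 - γ / (1 - x') with hadef
  set b := γ / (1 - x') with hbdef
  have hb0 : 0 ≤ b := by positivity
  have hb1 : b ≤ 1 := by rw [hbdef, div_le_one hd]; linarith
  have ha0 : 0 ≤ a := by rw [hadef]; linarith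
  have hab : a + b = 1 := by rw [hadef, hbdef]; ring
  have hcomb : a * x' + b * 1 = x' + γ := by
    rw [hadef, hbdef]; field_simp; ring
  have step2 : ℓ (x' + γ) ≤ a * ℓ x' := by
    have := hconv.2 hmem1 (Set.mem_Icc.mpr ⟨by norm_num, le_refl 1⟩) ha0 hb0 hab
    simp only [smul_eq_mul] at this
    rw [hcomb, hone] at this
    linarith
  -- step 3: a ≤ exp(-γ)
  have step3 : a ≤ Real.exp (-γ) := by
    have h1 : γ ≤ γ / (1 - x') := by
      rw [le_div_iff₀ hd]; nlinarith
    have h2 : a ≤ 1 - γ := by rw [hadef]; linarith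
    have h3 : 1 - γ ≤ Real.exp (-γ) := by
      have := Real.add_one_le_exp (-γ); linarith
    linarith
  -- combine
  have htr := htrunc x hx1 hx2
  rw [← hx'def] at htr
  calc ℓ t ≤ a * ℓ x' := le_trans step1 step2
    _ ≤ Real.exp (-γ) * ℓ x' := mul_le_mul_of_nonneg_right step3 (hnn x')
    _ = Real.exp (-γ) * ℓ x := by rw [← htr]
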